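/- If two density matrices ρ and σ satisfy R(ρ) ≥ R(σ) for every resource monotone R (i.e., for every function from density matrices to nonnegative reals that is nonincreasing under every free operation and vanishes on free states), then ρ is convertible to σ by free operations, i.e., inf_{Λ ∈ O} ‖Λ(ρ) − σ‖₁ = 0. -/

import Mathlib

open scoped Matrix Kronecker ComplexOrder

noncomputable section

/-- A density matrix: positive semidefinite with unit trace. -/
def IsDensityMatrix {ι : Type*} [Fintype ι] (ρ : Matrix ι ι ℂ) : Prop :=
  ρ.PosSemidef ∧ ρ.trace = 1

/-- The trace norm `‖M‖₁ = Tr √(M† M)`. -/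
noncomputable def traceNorm {ι : Type*} [Fintype ι] [DecidableEq ι]
    (M : Matrix ι ι ℂ) : ℝ :=
  (((Matrix.posSemidef_conjTranspose_mul_self M).1.eigenvectorUnitary.1 *
    Matrix.diagonal (((↑) : ℝ → ℂ) ∘ (Real.sqrt ·) ∘ (Matrix.posSemidef_conjTranspose_mul_self M).1.eigenvalues) *
    (star (Matrix.posSemidef_conjTranspose_mul_self M).1.eigenvectorUnitary : Matrix ι ι ℂ)).trace).re

/-- The amplification `Λ ⊗ id_k` of a linear map on matrices. -/
def amplify {ι : Type*} [Fintype ι] [DecidableEq ι]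
    (Λ : Matrix ι ι ℂ →ₗ[ℂ] Matrix ι ι ℂ) (k : ℕ)
    (M : Matrix (ι × Fin k) (ι × Fin k) ℂ) : Matrix (ι × Fin k) (ι × Fin k) ℂ :=
  Matrix.of fun p q => Λ (Matrix.of fun i j => M (i, p.2) (j, q.2)) p.1 q.1

/-- A linear map on matrices is CPTP (a quantum channel) if all its amplifications
preserve positive semidefiniteness and it preserves the trace. -/
def IsCPTP {ι : Type*} [Fintype ι] [DecidableEq ι]
    (Λ : Matrix ι ι ℂ →ₗ[ℂ] Matrix ι ι ℂ) : Prop :=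
  (∀ (k : ℕ) (M : Matrix (ι × Fin k) (ι × Fin k) ℂ),
      M.PosSemidef → (amplify Λ k M).PosSemidef) ∧
  (∀ M, (Λ M).trace = M.trace)

/-- A quantum channel on a `d`-dimensional system. -/
structure QChannel (d : ℕ) where
  toFun : Matrix (Fin d) (Fin d) ℂ →ₗ[ℂ] Matrix (Fin d) (Fin d) ℂ
  cptp : IsCPTP toFun

/-- A resource theory: a convex compact set `F` of free states and a set `O` of free
operations containing the identity, closed under composition, preserving `F`, and
containing the state-preparation channel `ρ ↦ Tr(ρ)σ` for every free `σ`. -/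
structure ResourceTheory (d : ℕ) where
  F : Set (Matrix (Fin d) (Fin d) ℂ)
  O : Set (QChannel d)
  F_density : ∀ σ ∈ F, IsDensityMatrix σ
  F_convex : Convex ℝ F
  F_compact : IsCompact F
  id_mem : ∃ Λ ∈ O, ∀ ρ, Λ.toFun ρ = ρ
  comp_mem : ∀ Λ₁ ∈ O, ∀ Λ₂ ∈ O, ∃ Λ ∈ O, ∀ ρ, Λ.toFun ρ = Λ₂.toFun (Λ₁.toFun ρ)
  free_mapsto : ∀ Λ ∈ O, ∀ σ ∈ F, Λ.toFun σ ∈ F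
  prep_mem : ∀ σ ∈ F, ∃ Λ ∈ O, ∀ ρ : Matrix (Fin d) (Fin d) ℂ, Λ.toFun ρ = ρ.trace • σ

/-- `ρ → σ`: for every `ε > 0` some free operation maps `ρ` within trace-distance `ε` of `σ`. -/
def Converts {d : ℕ} (RT : ResourceTheory d) (ρ σ : Matrix (Fin d) (Fin d) ℂ) : Prop :=
  ∀ ε > 0, ∃ Λ ∈ RT.O, traceNorm (Λ.toFun ρ - σ) < ε

/-- A resource monotone: nonnegative on states, nonincreasing under free operations,
vanishing on free states. -/
def IsMonotone {d : ℕ} (RT : ResourceTheory d) (R : Matrix (Fin d) (Fin d) ℂ → ℝ) : Prop :=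
  (∀ ρ, IsDensityMatrix ρ → 0 ≤ R ρ) ∧
  (∀ ρ, IsDensityMatrix ρ → ∀ Λ ∈ RT.O, R (Λ.toFun ρ) ≤ R ρ) ∧
  (∀ σ ∈ RT.F, R σ = 0)

/-- The pure state `|ψ⟩⟨ψ|`. -/
def pureState {ι : Type*} (ψ : ι → ℂ) : Matrix ι ι ℂ :=
  Matrix.vecMulVec ψ (star ψ)

/-- `ψ` is a unit vector. -/
def IsUnitVec {ι : Type*} [Fintype ι] (ψ : ι → ℂ) : Prop :=
  ∑ i, Complex.normSq (ψ i) = 1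

/-- Trace-norm distance from `ρ` to a set of states. -/
noncomputable def distToSet {ι : Type*} [Fintype ι] [DecidableEq ι]
    (F : Set (Matrix ι ι ℂ)) (ρ : Matrix ι ι ℂ) : ℝ :=
  sInf ((fun μ => traceNorm (ρ - μ)) '' F)



/-! ### Auxiliary lemmas -/

lemma psd_diag_nonneg' {ι : Type*} [Fintype ι] [DecidableEq ι] {A : Matrix ι ι ℂ}
    (hA : A.PosSemidef) (i : ι) : 0 ≤ A i i := by
  exact hA.diag_nonneg

lemma traceNorm_eq_sum' {ι : Type*} [Fintype ι] [DecidableEq ι] (M : Matrix ι ι ℂ) :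
    traceNorm M = ∑ i, Real.sqrt ((Matrix.posSemidef_conjTranspose_mul_self M).1.eigenvalues i) := by
  rw [traceNorm, Matrix.trace_mul_comm, ← mul_assoc, Unitary.coe_star_mul_self, one_mul,
    Matrix.trace_diagonal, Complex.re_sum]
  simp

lemma traceNorm_nonneg' {ι : Type*} [Fintype ι] [DecidableEq ι] (M : Matrix ι ι ℂ) :
    0 ≤ traceNorm M := by
  rw [traceNorm_eq_sum']
  exact Finset.sum_nonneg fun i _ => Real.sqrt_nonneg _

lemma traceNorm_zero' {ι : Type*} [Fintype ι] [DecidableEq ι] :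
    traceNorm (0 : Matrix ι ι ℂ) = 0 := by
  have h := Matrix.posSemidef_conjTranspose_mul_self (0 : Matrix ι ι ℂ)
  have hsum := h.1.trace_eq_sum_eigenvalues
  simp only [Matrix.conjTranspose_zero, Matrix.mul_zero, Matrix.trace_zero] at hsum
  have hsum' : ∑ i, h.1.eigenvalues i = 0 := by simpa using congrArg Complex.re hsum.symm
  have hz := (Finset.sum_eq_zero_iff_of_nonneg fun i _ => h.eigenvalues_nonneg i).mp hsum'
  rw [traceNorm_eq_sum']
  exact Finset.sum_eq_zero fun i hi => by rw [hz i hi, Real.sqrt_zero]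

lemma traceNorm_sq_le' {ι : Type*} [Fintype ι] [DecidableEq ι] (M : Matrix ι ι ℂ) :
    traceNorm M ^ 2 ≤ (Fintype.card ι : ℝ) * ∑ i, ∑ j, Complex.normSq (M i j) := by
  set h := Matrix.posSemidef_conjTranspose_mul_self M
  have h1 := traceNorm_eq_sum' M
  have h2 : (∑ i, Real.sqrt (h.1.eigenvalues i)) ^ 2
      ≤ (Fintype.card ι : ℝ) * ∑ i, Real.sqrt (h.1.eigenvalues i) ^ 2 := by
    simpa using sq_sum_le_card_mul_sum_sq (s := Finset.univ)
      (f := fun i => Real.sqrt (h.1.eigenvalues i))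
  have h5 : ∑ i, Real.sqrt (h.1.eigenvalues i) ^ 2 = ((Mᴴ * M).trace).re := by
    rw [h.1.trace_eq_sum_eigenvalues, Complex.re_sum]
    refine Finset.sum_congr rfl fun i _ => ?_
    rw [Real.sq_sqrt (h.eigenvalues_nonneg i)]
    simp
  have h6 : ((Mᴴ * M).trace).re = ∑ i, ∑ j, Complex.normSq (M i j) := by
    rw [Matrix.trace, Complex.re_sum]
    rw [Finset.sum_comm]
    refine Finset.sum_congr rfl fun i _ => ?_
    rw [Matrix.diag_apply, Matrix.mul_apply, Complex.re_sum]
    refine Finset.sum_congr rfl fun j _ => ?_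
    rw [Matrix.conjTranspose_apply]
    simp [Complex.normSq_apply, Complex.mul_re]
  rw [h1]
  calc (∑ i, Real.sqrt (h.1.eigenvalues i)) ^ 2
      ≤ (Fintype.card ι : ℝ) * ∑ i, Real.sqrt (h.1.eigenvalues i) ^ 2 := h2
    _ = (Fintype.card ι : ℝ) * ∑ i, ∑ j, Complex.normSq (M i j) := by rw [h5, h6]

/-- If `R(ρ) ≥ R(σ)` for every resource monotone `R`, then `ρ` is
convertible to `σ` by free operations: `inf_{Λ ∈ O} ‖Λ(ρ) − σ‖₁ = 0`. -/
theorem monotones_imply_convertibility {d : ℕ} (RT : ResourceTheory d)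
    (ρ σ : Matrix (Fin d) (Fin d) ℂ) (hρ : IsDensityMatrix ρ) (hσ : IsDensityMatrix σ)
    (h : ∀ R : Matrix (Fin d) (Fin d) ℂ → ℝ, IsMonotone RT R → R σ ≤ R ρ) :
    sInf ((fun Λ : QChannel d => traceNorm (Λ.toFun ρ - σ)) '' RT.O) = 0 := by
  classical
  set S : Set (Matrix (Fin d) (Fin d) ℂ) := (fun Λ : QChannel d => Λ.toFun ρ) '' RT.O with hSdef
  set G : Set (Matrix (Fin d) (Fin d) ℂ) := closure S ∪ RT.F with hGdef
  set R : Matrix (Fin d) (Fin d) ℂ → ℝ := fun τ => if τ ∈ G then 0 else 1 with hRdef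
  have hmono : IsMonotone RT R := by
    refine ⟨fun τ _ => ?_, fun τ _ Λ' hΛ' => ?_, fun τ hτ => ?_⟩
    · by_cases hg : τ ∈ G <;> simp [R, hg]
    · by_cases hg : τ ∈ G
      · have hg2 : Λ'.toFun τ ∈ G := by
          rcases hg with hg | hg
          · exact Or.inl (map_mem_closure Λ'.toFun.continuous_of_finiteDimensional hg
              (by rintro x ⟨Λ, hΛ, rfl⟩
                  obtain ⟨Λ'', hΛ'', hcomp⟩ := RT.comp_mem Λ hΛ Λ' hΛ'
                  exact ⟨Λ'', hΛ'', by simpa using hcomp ρ⟩))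
          · exact Or.inr (RT.free_mapsto Λ' hΛ' τ hg)
        simp [R, hg, hg2]
      · by_cases hg2 : Λ'.toFun τ ∈ G <;> simp [R, hg, hg2]
    · simp [R, show τ ∈ G from Or.inr hτ]
  have hρG : ρ ∈ G := by
    obtain ⟨Λ, hΛ, hid⟩ := RT.id_mem
    exact Or.inl (subset_closure ⟨Λ, hΛ, hid ρ⟩)
  have hσG : σ ∈ G := by
    by_contra hc
    have h1 := h R hmono
    simp [R, hρG, hc] at h1
    linarith
  have hne : ((fun Λ : QChannel d => traceNorm (Λ.toFun ρ - σ)) '' RT.O).Nonempty := by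
    obtain ⟨Λ, hΛ, _⟩ := RT.id_mem
    exact ⟨_, ⟨Λ, hΛ, rfl⟩⟩
  have hbdd : BddBelow ((fun Λ : QChannel d => traceNorm (Λ.toFun ρ - σ)) '' RT.O) := by
    refine ⟨0, ?_⟩
    rintro x ⟨Λ, _, rfl⟩
    exact traceNorm_nonneg' _
  refine le_antisymm ?_ (le_csInf hne (by rintro x ⟨Λ, _, rfl⟩; exact traceNorm_nonneg' _))
  have key : ∀ ε > (0:ℝ), ∃ Λ ∈ RT.O, traceNorm (Λ.toFun ρ - σ) < ε := by
    intro ε hε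
    rcases hσG with hcl | hF
    · -- σ is in the closure of the achievable set
      set c : ℝ := (d : ℝ) with hc
      have hc0 : 0 ≤ c := Nat.cast_nonneg d
      set δ : ℝ := ε / (c ^ 2 + 1) with hδdef
      have hδ : 0 < δ := by positivity
      have hU : {x : Matrix (Fin d) (Fin d) ℂ | ∀ i j, ‖x i j - σ i j‖ < δ} ∈ nhds σ := by
        have hopen : IsOpen {x : Matrix (Fin d) (Fin d) ℂ | ∀ i j, ‖x i j - σ i j‖ < δ} := by
          have : {x : Matrix (Fin d) (Fin d) ℂ | ∀ i j, ‖x i j - σ i j‖ < δ}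
              = ⋂ i, ⋂ j, (fun x : Matrix (Fin d) (Fin d) ℂ => x i j) ⁻¹'
                Metric.ball (σ i j) δ := by
            ext x; simp [Metric.mem_ball, dist_eq_norm]
          rw [this]
          exact isOpen_iInter_of_finite fun i => isOpen_iInter_of_finite fun j =>
            Metric.isOpen_ball.preimage (continuous_apply_apply i j)
        exact hopen.mem_nhds (by simp [hδ])
      obtain ⟨x, hxU, hxS⟩ := mem_closure_iff_nhds.mp hcl _ hU
      obtain ⟨Λ, hΛ, rfl⟩ := hxS
      refine ⟨Λ, hΛ, ?_⟩
      have hsum : ∑ i, ∑ j, Complex.normSq ((Λ.toFun ρ - σ) i j) ≤ c ^ 2 * δ ^ 2 := by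
        have hbound : ∀ i j, Complex.normSq ((Λ.toFun ρ - σ) i j) ≤ δ ^ 2 := by
          intro i j
          have hx := hxU i j
          have : Complex.normSq ((Λ.toFun ρ - σ) i j)
              = ‖Λ.toFun ρ i j - σ i j‖ ^ 2 := by
            rw [Matrix.sub_apply, ← Complex.sq_norm]
          rw [this]
          exact pow_le_pow_left₀ (norm_nonneg _) hx.le 2
        calc ∑ i, ∑ j, Complex.normSq ((Λ.toFun ρ - σ) i j)
            ≤ ∑ _i : Fin d, ∑ _j : Fin d, δ ^ 2 :=
              Finset.sum_le_sum fun i _ => Finset.sum_le_sum fun j _ => hbound i j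
          _ = c ^ 2 * δ ^ 2 := by simp [hc]; ring
      have hub : traceNorm (Λ.toFun ρ - σ) ^ 2 ≤ c ^ 3 * δ ^ 2 := by
        have := traceNorm_sq_le' (Λ.toFun ρ - σ)
        simp only [Fintype.card_fin] at this
        calc traceNorm (Λ.toFun ρ - σ) ^ 2
            ≤ c * ∑ i, ∑ j, Complex.normSq ((Λ.toFun ρ - σ) i j) := this
          _ ≤ c * (c ^ 2 * δ ^ 2) := mul_le_mul_of_nonneg_left hsum hc0
          _ = c ^ 3 * δ ^ 2 := by ring
      have hlt : c ^ 3 * δ ^ 2 < ε ^ 2 := by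
        rw [hδdef]
        rw [div_pow]
        have hd : c ^ 3 < (c ^ 2 + 1) ^ 2 := by nlinarith [sq_nonneg (c^2 - c), sq_nonneg c]
        have hpos : (0:ℝ) < (c ^ 2 + 1) ^ 2 := by positivity
        calc c ^ 3 * (ε ^ 2 / (c ^ 2 + 1) ^ 2) = ε ^ 2 * (c ^ 3 / (c ^ 2 + 1) ^ 2) := by ring
          _ < ε ^ 2 * 1 := by
              apply mul_lt_mul_of_pos_left _ (by positivity)
              rw [div_lt_one hpos]; exact hd
          _ = ε ^ 2 := by ring
      exact lt_of_pow_lt_pow_left₀ 2 hε.le (lt_of_le_of_lt hub hlt)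
    · -- σ is free: prepare it exactly
      obtain ⟨Λ, hΛ, hprep⟩ := RT.prep_mem σ hF
      refine ⟨Λ, hΛ, ?_⟩
      have : Λ.toFun ρ - σ = 0 := by
        rw [hprep ρ, hρ.2, one_smul, sub_self]
      rw [this, traceNorm_zero']
      exact hε
  -- conclude sInf ≤ 0
  by_contra hpos
  push_neg at hpos
  obtain ⟨Λ, hΛ, hlt⟩ := key _ hpos
  exact absurd (csInf_le hbdd ⟨Λ, hΛ, rfl⟩) (not_le.mpr hlt)

end
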